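/- Let n ∈ ℕ and α, β, γ ∈ ℝ with α > 0, β > 0, and αβ + γ > 0. Then the lattice path matrix Lp_n(α,β,γ) is strictly totally positive. -/

import Mathlib

open Finset Matrix
open scoped Classical

/-- The entries of the lattice path matrix `Lp_n(α,β,γ)` in 0-based indexing:
`lpEnt α β γ i j` is the math entry `k_{i+1, j+1}`, determined by
`k_{1j} = α^{j−1}`, `k_{i1} = β^{i−1}` and
`k_{ij} = α k_{i,j−1} + β k_{i−1,j} + γ k_{i−1,j−1}`. -/
noncomputable def lpEnt (α β γ : ℝ) : ℕ → ℕ → ℝ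
  | 0, j => α ^ j
  | i + 1, 0 => β ^ (i + 1)
  | i + 1, j + 1 =>
      α * lpEnt α β γ (i + 1) j + β * lpEnt α β γ i (j + 1) + γ * lpEnt α β γ i j

/-- The `(n+1)×(n+1)` lattice path matrix `Lp_n(α,β,γ)`. -/
noncomputable def latticePath (n : ℕ) (α β γ : ℝ) :
    Matrix (Fin (n + 1)) (Fin (n + 1)) ℝ :=
  fun i j => lpEnt α β γ (i : ℕ) (j : ℕ)

/-- A square real matrix is strictly totally positive if every minor (the
determinant of any square submatrix obtained by selecting rows and columns
along strictly increasing index sequences) is positive. -/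
def IsStrictlyTotallyPositive {m : ℕ} (A : Matrix (Fin m) (Fin m) ℝ) : Prop :=
  ∀ (k : ℕ) (r c : Fin k → Fin m), StrictMono r → StrictMono c →
    0 < (A.submatrix r c).det

/-- the lower bidiagonal 0/1 matrix -/
def bidiagG (N : ℕ) : Matrix (Fin (N+1)) (Fin (N+1)) ℝ :=
  fun i j => (if (i:ℕ) = (j:ℕ) then 1 else 0) + (if (i:ℕ) = (j:ℕ) + 1 then 1 else 0)

lemma bidiagG_nonneg (N : ℕ) (i j : Fin (N+1)) : 0 ≤ bidiagG N i j := by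
  unfold bidiagG; positivity

lemma bidiagG_eq_zero {N : ℕ} {i j : Fin (N+1)} (h1 : (i:ℕ) ≠ (j:ℕ)) (h2 : (i:ℕ) ≠ (j:ℕ)+1) :
    bidiagG N i j = 0 := by
  unfold bidiagG; rw [if_neg h1, if_neg h2, add_zero]

lemma bidiag_minor_nonneg (N : ℕ) : ∀ (k : ℕ) (t s : Fin k → Fin (N+1)),
    StrictMono t → StrictMono s → 0 ≤ ((bidiagG N).submatrix t s).det := by
  intro k
  induction k with
  | zero => intro t s _ _; simp [Matrix.det_isEmpty]
  | succ k ih =>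
    intro t s ht hs
    rw [Matrix.det_succ_column _ (Fin.last k)]
    have hzero : ∀ i : Fin (k+1), i ≠ Fin.last k →
        (-1 : ℝ) ^ ((i:ℕ) + ((Fin.last k : Fin (k+1)):ℕ)) *
          (bidiagG N).submatrix t s i (Fin.last k) *
          (((bidiagG N).submatrix t s).submatrix i.succAbove (Fin.last k).succAbove).det
          = 0 := by
      intro i hi
      by_cases hts : (t i : ℕ) < (s (Fin.last k) : ℕ)
      · have : (bidiagG N).submatrix t s i (Fin.last k) = 0 := by
          apply bidiagG_eq_zero <;> omega
        rw [this]; ring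
      · -- t i ≥ s last ; cofactor has a zero row
        have hik : (i:ℕ) < k := by
          have := Fin.lt_last_iff_ne_last.mpr hi
          exact this
        set p : Fin k := ⟨(i:ℕ), hik⟩
        have hrow : ∀ q : Fin k,
            (((bidiagG N).submatrix t s).submatrix i.succAbove (Fin.last k).succAbove) p q = 0 := by
          intro q
          have hsucc : i.succAbove p = ⟨(i:ℕ)+1, by omega⟩ := by
            rw [Fin.succAbove]
            have : ¬ (p.castSucc < i) := by
              simp [Fin.lt_def]
              exact le_rfl
            rw [if_neg this]
            rfl
          have hcol : (Fin.last k).succAbove q = q.castSucc := by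
            simp [Fin.succAbove_last]
          simp only [Matrix.submatrix_apply, hsucc, hcol]
          -- entry bidiagG (t ⟨i+1⟩) (s q.castSucc)
          have h1 : (s (Fin.last k) : ℕ) ≤ (t i : ℕ) := by omega
          have h2 : (t i : ℕ) < (t ⟨(i:ℕ)+1, by omega⟩ : ℕ) := by
            apply ht
            simp [Fin.lt_def]
          have h3 : (s q.castSucc : ℕ) < (s (Fin.last k) : ℕ) := by
            apply hs
            simp only [Fin.lt_def, Fin.coe_castSucc, Fin.val_last]
            exact q.isLt
          apply bidiagG_eq_zero <;> omega
        have : (((bidiagG N).submatrix t s).submatrix i.succAbove (Fin.last k).succAbove).det = 0 :=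
          Matrix.det_eq_zero_of_row_eq_zero p hrow
        rw [this]; ring
    rw [Finset.sum_eq_single (Fin.last k) (fun i _ hi => hzero i hi) (by simp)]
    have hsign : (-1 : ℝ) ^ (((Fin.last k : Fin (k+1)):ℕ) + ((Fin.last k : Fin (k+1)):ℕ)) = 1 := by
      rw [← two_mul, pow_mul]
      norm_num
    rw [hsign, one_mul]
    have hcof : (((bidiagG N).submatrix t s).submatrix (Fin.last k).succAbove
        (Fin.last k).succAbove).det
        = ((bidiagG N).submatrix (t ∘ Fin.castSucc) (s ∘ Fin.castSucc)).det := by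
      congr 1
      rw [Matrix.submatrix_submatrix]
      congr 1 <;> funext x <;> simp [Fin.succAbove_last]
    apply mul_nonneg
    · exact bidiagG_nonneg N _ _
    · rw [hcof]
      exact ih _ _ (ht.comp Fin.strictMono_castSucc) (hs.comp Fin.strictMono_castSucc)

lemma sort_comp_eq {k N : ℕ} {s : Fin k → Fin N} (hs : StrictMono s) (σ : Equiv.Perm (Fin k)) :
    (s ∘ σ) ∘ Tuple.sort (s ∘ σ) = s := by
  set p : Fin k → Fin N := s ∘ σ with hp
  have hinj : Function.Injective p := hs.injective.comp σ.injective
  have h1 : StrictMono (p ∘ Tuple.sort p) :=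
    (Tuple.monotone_sort p).strictMono_of_injective (hinj.comp (Tuple.sort p).injective)
  have hcard : (Finset.univ.image s).card = k := by
    rw [Finset.card_image_of_injective _ hs.injective, Finset.card_univ, Fintype.card_fin]
  have e1 := Finset.orderEmbOfFin_unique hcard (f := p ∘ Tuple.sort p)
    (fun x => Finset.mem_image.2 ⟨σ (Tuple.sort p x), Finset.mem_univ _, rfl⟩) h1
  have e2 := Finset.orderEmbOfFin_unique hcard (f := s)
    (fun x => Finset.mem_image_of_mem _ (Finset.mem_univ x)) hs
  rw [e1, ← e2]


lemma sort_comp_perm {k N : ℕ} {s : Fin k → Fin N} (hs : StrictMono s) (σ : Equiv.Perm (Fin k)) :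
    (Tuple.sort (s ∘ σ))⁻¹ = σ := by
  have h := sort_comp_eq hs σ
  have hinj : Function.Injective (s ∘ σ) := hs.injective.comp σ.injective
  have key : Tuple.sort (s ∘ σ) = σ⁻¹ := by
    have hfun : ∀ x, Tuple.sort (s ∘ σ) x = σ⁻¹ x := by
      intro x
      have h1 : (s ∘ σ) (Tuple.sort (s ∘ σ) x) = s x := congrFun h x
      have h2 : (s ∘ σ) (σ⁻¹ x) = s x := by simp [Function.comp_apply]
      exact hinj (h1.trans h2.symm)
    exact Equiv.ext hfun
  rw [key, inv_inv]

lemma cauchyBinet {k N : ℕ} (A : Matrix (Fin k) (Fin N) ℝ) (B : Matrix (Fin N) (Fin k) ℝ) :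
    (A * B).det = ∑ s ∈ Finset.univ.filter (fun s : Fin k → Fin N => StrictMono s),
      (A.submatrix id s).det * (B.submatrix s id).det := by
  have h1 : (A * B).det
      = ∑ p : Fin k → Fin N, (∏ i, B (p i) i) * (A.submatrix id p).det := by
    calc (A * B).det
        = ∑ σ : Equiv.Perm (Fin k), ((Equiv.Perm.sign σ : ℤ) : ℝ)
            * ∏ i, (∑ x, A (σ i) x * B x i) := by
          rw [Matrix.det_apply']
          refine Finset.sum_congr rfl fun σ _ => ?_
          simp [Matrix.mul_apply]
      _ = ∑ σ : Equiv.Perm (Fin k), ∑ p : Fin k → Fin N,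
            ((Equiv.Perm.sign σ : ℤ) : ℝ) * ∏ i, (A (σ i) (p i) * B (p i) i) := by
          refine Finset.sum_congr rfl fun σ _ => ?_
          rw [Finset.prod_univ_sum, Finset.mul_sum, Fintype.piFinset_univ]
      _ = ∑ p : Fin k → Fin N, ∑ σ : Equiv.Perm (Fin k),
            ((Equiv.Perm.sign σ : ℤ) : ℝ) * ∏ i, (A (σ i) (p i) * B (p i) i) :=
          Finset.sum_comm
      _ = ∑ p : Fin k → Fin N, (∏ i, B (p i) i) * (A.submatrix id p).det := by
          refine Finset.sum_congr rfl fun p _ => ?_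
          rw [Matrix.det_apply', Finset.mul_sum]
          refine Finset.sum_congr rfl fun σ _ => ?_
          rw [Finset.prod_mul_distrib]
          simp only [Matrix.submatrix_apply, id_eq]
          ring
  rw [h1]
  have h2 : ∑ p : Fin k → Fin N, (∏ i, B (p i) i) * (A.submatrix id p).det
      = ∑ p ∈ Finset.univ.filter (fun p : Fin k → Fin N => Function.Injective p),
          (∏ i, B (p i) i) * (A.submatrix id p).det := by
    refine (Finset.sum_subset (Finset.filter_subset _ _) fun p _ hp => ?_).symm
    simp only [Finset.mem_filter, Finset.mem_univ, true_and] at hp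
    rw [Function.not_injective_iff] at hp
    obtain ⟨i, j, hij, hne⟩ := hp
    have : (A.submatrix id p).det = 0 :=
      Matrix.det_zero_of_column_eq hne (fun x => by simp [Matrix.submatrix_apply, hij])
    rw [this, mul_zero]
  rw [h2]
  have h3 : ∑ p ∈ Finset.univ.filter (fun p : Fin k → Fin N => Function.Injective p),
          (∏ i, B (p i) i) * (A.submatrix id p).det
      = ∑ x ∈ (Finset.univ.filter (fun s : Fin k → Fin N => StrictMono s)) ×ˢ
          (Finset.univ : Finset (Equiv.Perm (Fin k))),
          (∏ i, B (x.1 (x.2 i)) i) * (A.submatrix id (x.1 ∘ x.2)).det := by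
    refine Finset.sum_nbij' (i := fun p => (p ∘ Tuple.sort p, (Tuple.sort p)⁻¹))
      (j := fun x => x.1 ∘ x.2) ?_ ?_ ?_ ?_ ?_
    · intro p hp
      simp only [Finset.mem_filter, Finset.mem_univ, true_and] at hp
      simp only [Finset.mem_product, Finset.mem_filter, Finset.mem_univ, true_and, and_true]
      exact (Tuple.monotone_sort p).strictMono_of_injective
        (hp.comp (Tuple.sort p).injective)
    · intro x hx
      simp only [Finset.mem_product, Finset.mem_filter, Finset.mem_univ, true_and,
        and_true] at hx
      simp only [Finset.mem_filter, Finset.mem_univ, true_and]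
      exact hx.injective.comp x.2.injective
    · intro p hp
      funext x
      simp
    · intro x hx
      simp only [Finset.mem_product, Finset.mem_filter, Finset.mem_univ, true_and,
        and_true] at hx
      exact Prod.ext (sort_comp_eq hx x.2) (sort_comp_perm hx x.2)
    · intro p hp
      congr 1
      · exact Finset.prod_congr rfl fun i _ => by simp
      · congr 1
        funext x y
        simp [Matrix.submatrix_apply]
  rw [h3, Finset.sum_product]
  refine Finset.sum_congr rfl fun s hs => ?_
  simp only [Finset.mem_filter, Finset.mem_univ, true_and] at hs
  have hsub : ∀ σ : Equiv.Perm (Fin k),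
      (A.submatrix id (s ∘ σ)).det
        = ((Equiv.Perm.sign σ : ℤ) : ℝ) * (A.submatrix id s).det := by
    intro σ
    have : A.submatrix id (s ∘ σ) = (A.submatrix id s).submatrix id σ := by
      simp [Matrix.submatrix_submatrix]
    rw [this, Matrix.det_permute']
  calc ∑ σ : Equiv.Perm (Fin k), (∏ i, B (s (σ i)) i) * (A.submatrix id (s ∘ σ)).det
      = (A.submatrix id s).det * ∑ σ : Equiv.Perm (Fin k),
          ((Equiv.Perm.sign σ : ℤ) : ℝ) * ∏ i, (B.submatrix s id) (σ i) i := by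
        rw [Finset.mul_sum]
        refine Finset.sum_congr rfl fun σ _ => ?_
        rw [hsub σ]
        simp only [Matrix.submatrix_apply, id_eq]
        ring
    _ = (A.submatrix id s).det * (B.submatrix s id).det := by
        rw [← Matrix.det_apply']

def pascalTN (N : ℕ) : Matrix (Fin (N+1)) (Fin (N+1)) ℝ := fun i j => (Nat.choose i j : ℝ)

def pascalA (N : ℕ) : Matrix (Fin (N+1)) (Fin (N+1)) ℝ :=
  fun i j => if (i:ℕ) = 0 then (if (j:ℕ) = 0 then 1 else 0)
    else (if (j:ℕ) = 0 then 0 else (Nat.choose ((i:ℕ)-1) ((j:ℕ)-1) : ℝ))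

lemma pascal_entry (N : ℕ) (i j : Fin (N+1)) (hj : (j:ℕ) < N) :
    (Nat.choose i j : ℝ) = pascalA N i j + pascalA N i ⟨(j:ℕ)+1, by omega⟩ := by
  unfold pascalA
  have hco : ((⟨(j:ℕ)+1, by omega⟩ : Fin (N+1)) : ℕ) = (j:ℕ)+1 := rfl
  simp only [hco]
  by_cases h1 : (i:ℕ) = 0
  · by_cases h2 : (j:ℕ) = 0
    · simp only [h1, h2, if_pos rfl, if_neg (by omega : ¬((0:ℕ)+1 = 0))]
      norm_num
    · simp only [h1, if_pos rfl, if_neg h2, if_neg (by omega : ¬((j:ℕ)+1 = 0))]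
      rw [Nat.choose_eq_zero_of_lt (by omega : (0:ℕ) < (j:ℕ))]
      norm_num
  · by_cases h2 : (j:ℕ) = 0
    · simp only [if_neg h1, h2, if_pos rfl, if_neg (by omega : ¬((0:ℕ)+1 = 0))]
      norm_num
    · simp only [if_neg h1, if_neg h2, if_neg (by omega : ¬((j:ℕ)+1 = 0))]
      obtain ⟨i', hi'⟩ : ∃ i', (i:ℕ) = i'+1 := ⟨(i:ℕ)-1, by omega⟩
      obtain ⟨j', hj'⟩ : ∃ j', (j:ℕ) = j'+1 := ⟨(j:ℕ)-1, by omega⟩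
      simp only [hi', hj', Nat.add_sub_cancel]
      rw [Nat.choose_succ_succ' i' j']
      push_cast
      ring

lemma pascal_entry_last (N : ℕ) (i j : Fin (N+1)) (hj : (j:ℕ) = N) :
    (Nat.choose i j : ℝ) = pascalA N i j := by
  unfold pascalA
  by_cases h1 : (i:ℕ) = 0
  · by_cases h2 : (j:ℕ) = 0
    · simp only [h1, h2, if_pos rfl]
      norm_num
    · simp only [h1, if_pos rfl, if_neg h2]
      rw [Nat.choose_eq_zero_of_lt (by omega : (0:ℕ) < (j:ℕ))]
      norm_num
  · have hN : 1 ≤ N := by have := i.isLt; omega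
    simp only [if_neg h1, if_neg (by omega : ¬((j:ℕ) = 0))]
    by_cases hiN : (i:ℕ) = N
    · simp only [hiN, hj, Nat.choose_self]
    · have hlt1 : (i:ℕ) < (j:ℕ) := by have := i.isLt; omega
      have hlt2 : (i:ℕ)-1 < (j:ℕ)-1 := by omega
      rw [Nat.choose_eq_zero_of_lt hlt1, Nat.choose_eq_zero_of_lt hlt2]

lemma pascal_factor (N : ℕ) : pascalTN N = pascalA N * bidiagG N := by
  ext i j
  rw [Matrix.mul_apply]
  have hexp : ∀ t : Fin (N+1), pascalA N i t * bidiagG N t j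
      = pascalA N i t * (if (t:ℕ) = (j:ℕ) then 1 else 0)
        + pascalA N i t * (if (t:ℕ) = (j:ℕ)+1 then 1 else 0) := by
    intro t; unfold bidiagG; ring
  rw [Finset.sum_congr rfl fun t _ => hexp t, Finset.sum_add_distrib]
  have h1 : ∑ t : Fin (N+1), pascalA N i t * (if (t:ℕ) = (j:ℕ) then 1 else 0)
      = pascalA N i j := by
    rw [Finset.sum_eq_single j]
    · simp
    · intro t _ htj
      rw [if_neg (fun h => htj (Fin.ext h)), mul_zero]
    · simp
  rw [h1]
  by_cases hj : (j:ℕ) < N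
  · have h2 : ∑ t : Fin (N+1), pascalA N i t * (if (t:ℕ) = (j:ℕ)+1 then 1 else 0)
        = pascalA N i ⟨(j:ℕ)+1, by omega⟩ := by
      rw [Finset.sum_eq_single (⟨(j:ℕ)+1, by omega⟩ : Fin (N+1))]
      · simp
      · intro t _ htj
        have hne : (t:ℕ) ≠ (j:ℕ)+1 := by
          intro h
          exact htj (Fin.ext (by simpa using h))
        rw [if_neg hne, mul_zero]
      · simp
    rw [h2]
    exact pascal_entry N i j hj
  · have hjN : (j:ℕ) = N := by have := j.isLt; omega
    have h2 : ∑ t : Fin (N+1), pascalA N i t * (if (t:ℕ) = (j:ℕ)+1 then 1 else 0) = 0 := by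
      apply Finset.sum_eq_zero
      intro t _
      rw [if_neg (by have := t.isLt; omega), mul_zero]
    rw [h2, add_zero]
    exact pascal_entry_last N i j hjN

lemma sum_pred_add {k : ℕ} (r : Fin k → ℕ) (hr : ∀ i, 1 ≤ r i) :
    (∑ i, (r i - 1)) + k = ∑ i, r i := by
  have : ∀ i : Fin k, (r i - 1) + 1 = r i := fun i => by have := hr i; omega
  calc (∑ i, (r i - 1)) + k = ∑ i : Fin k, ((r i - 1) + 1) := by
        rw [Finset.sum_add_distrib]
        simp
    _ = ∑ i, r i := Finset.sum_congr rfl fun i _ => this i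

lemma binom_det_nonneg_aux : ∀ (μ k : ℕ) (r s : Fin k → ℕ), StrictMono r → StrictMono s →
    k + ∑ i, r i < μ → 0 ≤ (Matrix.of fun i j => ((r i).choose (s j) : ℝ)).det := by
  intro μ
  induction μ using Nat.strong_induction_on with
  | _ μ IH =>
  intro k r s hr hs hμ
  match k with
  | 0 => simp [Matrix.det_isEmpty]
  | (k+1) =>
    by_cases h0 : r 0 = 0
    · by_cases hs0 : s 0 = 0
      · rw [Matrix.det_succ_row_zero]
        rw [Finset.sum_eq_single 0]
        · simp only [Matrix.of_apply, Fin.val_zero, pow_zero, one_mul, h0, hs0,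
            Nat.choose_self, Nat.cast_one, Fin.succAbove_zero]
          have hsub : ((Matrix.of fun i j => (((r i).choose (s j) : ℕ) : ℝ)).submatrix
              Fin.succ Fin.succ)
              = Matrix.of (fun i j : Fin k => ((fun i => r i.succ) i).choose
                  ((fun j => s j.succ) j) : Fin k → Fin k → ℝ) := by
            ext i j; simp
          rw [hsub]
          have hμ' : k + (∑ i : Fin k, r i.succ) + 1 < μ := by
            rw [Fin.sum_univ_succ r] at hμ
            omega
          refine IH (k + (∑ i : Fin k, r i.succ) + 1) hμ' k _ _
            (hr.comp Fin.strictMono_succ) (hs.comp Fin.strictMono_succ) ?_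
          show k + (∑ i : Fin k, r i.succ) < k + (∑ i : Fin k, r i.succ) + 1
          omega
        · intro j _ hj
          have hlt : 0 < s j := by
            have : s 0 < s j := hs (Fin.pos_iff_ne_zero.mpr hj)
            omega
          simp only [Matrix.of_apply, h0, Nat.choose_eq_zero_of_lt hlt, Nat.cast_zero,
            mul_zero, zero_mul]
        · simp
      · apply le_of_eq
        symm
        apply Matrix.det_eq_zero_of_row_eq_zero 0
        intro j
        have hlt : 0 < s j := by
          have h1 : 0 < s 0 := Nat.pos_of_ne_zero hs0
          rcases eq_or_ne j 0 with rfl | hj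
          · exact h1
          · have : s 0 < s j := hs (Fin.pos_iff_ne_zero.mpr hj)
            omega
        simp [h0, Nat.choose_eq_zero_of_lt hlt]
    · -- r 0 ≥ 1
      have hr1 : ∀ i, 1 ≤ r i := by
        intro i
        rcases eq_or_ne i 0 with rfl | hi
        · omega
        · have : r 0 < r i := hr (Fin.pos_iff_ne_zero.mpr hi)
          omega
      set N := (∑ i, r i) + (∑ j, s j) with hN
      have hrb : ∀ i, r i < N + 1 := by
        intro i
        have : r i ≤ ∑ i, r i := Finset.single_le_sum (fun _ _ => Nat.zero_le _)
          (Finset.mem_univ i)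
        omega
      have hsb : ∀ j, s j < N + 1 := by
        intro j
        have : s j ≤ ∑ j, s j := Finset.single_le_sum (fun _ _ => Nat.zero_le _)
          (Finset.mem_univ j)
        omega
      set r' : Fin (k+1) → Fin (N+1) := fun i => ⟨r i, hrb i⟩ with hr'
      set s' : Fin (k+1) → Fin (N+1) := fun j => ⟨s j, hsb j⟩ with hs'
      have hr'm : StrictMono r' := fun a b hab => by
        simp only [hr', Fin.mk_lt_mk]
        exact hr hab
      have hs'm : StrictMono s' := fun a b hab => by
        simp only [hs', Fin.mk_lt_mk]
        exact hs hab
      have hkey : (Matrix.of fun i j => (((r i).choose (s j) : ℕ) : ℝ))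
          = ((pascalA N).submatrix r' id) * ((bidiagG N).submatrix id s') := by
        have h1 : (Matrix.of fun i j => (((r i).choose (s j) : ℕ) : ℝ))
            = (pascalTN N).submatrix r' s' := by
          ext i j; simp [pascalTN, hr', hs']
        rw [h1, pascal_factor]
        ext i j
        simp [Matrix.mul_apply]
      rw [hkey, cauchyBinet]
      apply Finset.sum_nonneg
      intro t ht
      simp only [Finset.mem_filter, Finset.mem_univ, true_and] at ht
      apply mul_nonneg
      · -- pascalA minor
        rw [Matrix.submatrix_submatrix]
        by_cases ht0 : (t 0 : ℕ) = 0
        · apply le_of_eq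
          symm
          apply Matrix.det_eq_zero_of_column_eq_zero 0
          intro i
          simp only [Matrix.submatrix_apply, Function.comp_apply, id_eq]
          unfold pascalA
          rw [if_neg (show ¬(((r' i : ℕ)) = 0) from fun h =>
            absurd (show r i = 0 from h) (by have := hr1 i; omega)), if_pos ht0]
        · have ht1 : ∀ j, 1 ≤ (t j : ℕ) := by
            intro j
            rcases eq_or_ne j 0 with rfl | hj
            · omega
            · have : t 0 < t j := ht (Fin.pos_iff_ne_zero.mpr hj)
              have h2 : (t 0 : ℕ) < (t j : ℕ) := this
              omega
          have heq : (pascalA N).submatrix (r' ∘ id) (id ∘ t)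
              = Matrix.of (fun i j => ((fun i => r i - 1) i).choose
                  ((fun j => (t j : ℕ) - 1) j) : Fin (k+1) → Fin (k+1) → ℝ) := by
            ext i j
            simp only [Matrix.submatrix_apply, Function.comp_apply, id_eq, Matrix.of_apply]
            unfold pascalA
            rw [if_neg (show ¬(((r' i : ℕ)) = 0) from fun h =>
              absurd (show r i = 0 from h) (by have := hr1 i; omega)),
              if_neg (show ¬(((t j : ℕ)) = 0) from by have := ht1 j; omega)]
          rw [heq]
          have hm1 : StrictMono (fun i : Fin (k+1) => r i - 1) := by
            intro a b hab
            have h1 := hr hab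
            have h2 := hr1 a
            simp only []
            omega
          have hm2 : StrictMono (fun j : Fin (k+1) => (t j : ℕ) - 1) := by
            intro a b hab
            have h1 : (t a : ℕ) < (t b : ℕ) := ht hab
            have h2 := ht1 a
            simp only []
            omega
          have hsp := sum_pred_add r hr1
          have hμ' : (k+1) + (∑ i : Fin (k+1), (r i - 1)) + 1 < μ := by omega
          refine IH ((k+1) + (∑ i : Fin (k+1), (r i - 1)) + 1) hμ' (k+1) _ _ hm1 hm2 ?_
          show (k+1) + (∑ i : Fin (k+1), (r i - 1)) < (k+1) + (∑ i : Fin (k+1), (r i - 1)) + 1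
          omega
      · -- bidiag minor
        rw [Matrix.submatrix_submatrix]
        exact bidiag_minor_nonneg N (k+1) (id ∘ t) (s' ∘ id) ht hs'm

lemma binom_det_nonneg {k : ℕ} (r s : Fin k → ℕ) (hr : StrictMono r) (hs : StrictMono s) :
    0 ≤ (Matrix.of fun i j => ((r i).choose (s j) : ℝ)).det :=
  binom_det_nonneg_aux (k + ∑ i, r i + 1) k r s hr hs (by omega)

lemma binom_det_id_pos {k : ℕ} (r : Fin k → ℕ) (hr : StrictMono r) :
    0 < (Matrix.of fun i j : Fin k => ((r i).choose (j : ℕ) : ℝ)).det := by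
  have h1 := Matrix.det_eval_matrixOfPolynomials_eq_det_vandermonde
    (v := fun i : Fin k => ((r i : ℕ) : ℝ)) (p := fun j : Fin k => descPochhammer ℝ (j:ℕ))
    (fun j => descPochhammer_natDegree ℝ _) (fun j => monic_descPochhammer ℝ _)
  have h2 : (Matrix.of fun i j : Fin k =>
        Polynomial.eval (((r i : ℕ) : ℝ)) (descPochhammer ℝ (j:ℕ)))
      = Matrix.of (fun i j : Fin k => (fun j : Fin k => ((Nat.factorial (j:ℕ) : ℕ) : ℝ)) j *
          (Matrix.of fun i j : Fin k => ((r i).choose (j : ℕ) : ℝ)) i j) := by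
    ext i j
    simp only [Matrix.of_apply]
    rw [descPochhammer_eval_eq_descFactorial,
      Nat.descFactorial_eq_factorial_mul_choose]
    push_cast
    ring
  have h3 : (Matrix.vandermonde fun i : Fin k => ((r i : ℕ) : ℝ)).det
      = (∏ j : Fin k, ((Nat.factorial (j:ℕ) : ℕ) : ℝ)) *
        (Matrix.of fun i j : Fin k => ((r i).choose (j : ℕ) : ℝ)).det := by
    rw [h1, h2]
    exact Matrix.det_mul_row _ _
  have hvdm : 0 < (Matrix.vandermonde fun i : Fin k => ((r i : ℕ) : ℝ)).det := by
    rw [Matrix.det_vandermonde]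
    apply Finset.prod_pos
    intro i _
    apply Finset.prod_pos
    intro j hj
    rw [Finset.mem_Ioi] at hj
    have : r i < r j := hr hj
    have : ((r i : ℕ) : ℝ) < ((r j : ℕ) : ℝ) := by exact_mod_cast this
    linarith
  have hf : 0 < ∏ j : Fin k, ((Nat.factorial (j:ℕ) : ℕ) : ℝ) := by
    apply Finset.prod_pos
    intro j _
    exact_mod_cast Nat.factorial_pos _
  nlinarith [hvdm, hf, h3]

/-- telescoping recurrence for the binomial sums -/
lemma S_rec (q : ℝ) (i j N : ℕ) (hN : i + j + 2 ≤ N) :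
    ∑ m ∈ Finset.range N, ((i+1).choose m : ℝ) * ((j+1).choose m) * q ^ m
      = (∑ m ∈ Finset.range N, ((i+1).choose m : ℝ) * (j.choose m) * q ^ m)
        + (∑ m ∈ Finset.range N, (i.choose m : ℝ) * ((j+1).choose m) * q ^ m)
        + (q - 1) * ∑ m ∈ Finset.range N, (i.choose m : ℝ) * (j.choose m) * q ^ m := by
  obtain ⟨N', rfl⟩ : ∃ N', N = N' + 1 := ⟨N - 1, by omega⟩
  rw [← sub_eq_zero]
  set F : ℕ → ℝ := fun m => ((i+1).choose m : ℝ) * ((j+1).choose m) * q ^ m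
    - ((i+1).choose m : ℝ) * (j.choose m) * q ^ m
    - (i.choose m : ℝ) * ((j+1).choose m) * q ^ m
    - (q - 1) * ((i.choose m : ℝ) * (j.choose m) * q ^ m) with hF
  set G : ℕ → ℝ := fun m => (i.choose m : ℝ) * (j.choose m) * q ^ (m+1) with hG
  have hcomb : (∑ m ∈ Finset.range (N'+1), ((i+1).choose m : ℝ) * ((j+1).choose m) * q ^ m)
      - ((∑ m ∈ Finset.range (N'+1), ((i+1).choose m : ℝ) * (j.choose m) * q ^ m)
        + (∑ m ∈ Finset.range (N'+1), (i.choose m : ℝ) * ((j+1).choose m) * q ^ m)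
        + (q - 1) * ∑ m ∈ Finset.range (N'+1), (i.choose m : ℝ) * (j.choose m) * q ^ m)
      = ∑ m ∈ Finset.range (N'+1), F m := by
    rw [Finset.mul_sum, ← Finset.sum_add_distrib, ← Finset.sum_add_distrib,
      ← Finset.sum_sub_distrib]
    apply Finset.sum_congr rfl
    intro m _
    simp only [hF]
    ring
  rw [hcomb]
  have hstep : ∀ m, F (m+1) = G m - G (m+1) := by
    intro m
    simp only [hF, hG]
    rw [Nat.choose_succ_succ' i m, Nat.choose_succ_succ' j m]
    push_cast
    ring
  have hF0 : F 0 = - G 0 := by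
    simp only [hF, hG]
    norm_num
    ring
  rw [Finset.sum_range_succ' F N']
  have htel : ∑ m ∈ Finset.range N', F (m+1) = G 0 - G N' := by
    rw [Finset.sum_congr rfl (fun m _ => hstep m)]
    exact Finset.sum_range_sub' G N'
  rw [htel, hF0]
  have hGN : G N' = 0 := by
    simp only [hG]
    rw [Nat.choose_eq_zero_of_lt (by omega : i < N')]
    norm_num
  rw [hGN]
  ring


/-- extend/shrink the summation range -/
lemma S_ext (q : ℝ) (i j : ℕ) {M M' : ℕ} (h : i < M) (h' : i < M') :
    ∑ m ∈ Finset.range M, (i.choose m : ℝ) * (j.choose m) * q ^ m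
      = ∑ m ∈ Finset.range M', (i.choose m : ℝ) * (j.choose m) * q ^ m := by
  have key : ∀ {a b : ℕ}, i < a → a ≤ b →
      ∑ m ∈ Finset.range a, (i.choose m : ℝ) * (j.choose m) * q ^ m
        = ∑ m ∈ Finset.range b, (i.choose m : ℝ) * (j.choose m) * q ^ m := by
    intro a b ha hab
    apply Finset.sum_subset (Finset.range_subset_range.mpr hab)
    intro m _ hm
    rw [Finset.mem_range, not_lt] at hm
    rw [Nat.choose_eq_zero_of_lt (by omega : i < m)]
    norm_num
  rcases le_total M M' with hle | hle
  · exact key h hle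
  · exact (key h' hle).symm

lemma lpEnt_formula (α β γ : ℝ) (hα : α ≠ 0) (hβ : β ≠ 0) : ∀ i j : ℕ,
    lpEnt α β γ i j = β ^ i * α ^ j *
      ∑ m ∈ Finset.range (i + j + 1),
        (i.choose m : ℝ) * (j.choose m) * ((α * β + γ) / (α * β)) ^ m := by
  intro i
  induction i with
  | zero =>
    intro j
    rw [show lpEnt α β γ 0 j = α ^ j from by simp [lpEnt]]
    rw [Finset.sum_eq_single 0]
    · norm_num
    · intro m _ hm
      rw [Nat.choose_eq_zero_of_lt (by omega : 0 < m)]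
      norm_num
    · simp
  | succ i ihi =>
    intro j
    induction j with
    | zero =>
      rw [show lpEnt α β γ (i+1) 0 = β ^ (i+1) from by simp [lpEnt]]
      rw [Finset.sum_eq_single 0]
      · norm_num
      · intro m _ hm
        rw [Nat.choose_eq_zero_of_lt (show (0:ℕ) < m by omega)]
        norm_num
      · simp
    | succ j ihj =>
      set q : ℝ := (α * β + γ) / (α * β) with hq
      have hrec : lpEnt α β γ (i+1) (j+1)
          = α * lpEnt α β γ (i+1) j + β * lpEnt α β γ i (j+1) + γ * lpEnt α β γ i j := by
        simp [lpEnt]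
      rw [hrec, ihj, ihi (j+1), ihi j]
      set N : ℕ := i + j + 3 with hN2
      rw [S_ext q (i+1) j (by omega) (show i+1 < N by omega),
          S_ext q i (j+1) (by omega) (show i < N by omega),
          S_ext q i j (by omega) (show i < N by omega),
          S_ext q (i+1) (j+1) (by omega) (show i+1 < N by omega)]
      rw [S_rec q i j N (by omega)]
      have hγ : γ = α * β * (q - 1) := by
        rw [hq]
        field_simp
        ring
      rw [hγ]
      ring

noncomputable def lpL (n : ℕ) (β c : ℝ) : Matrix (Fin (n+1)) (Fin (n+1)) ℝ :=
  fun i m => (Nat.choose (i:ℕ) (m:ℕ) : ℝ) * β ^ ((i:ℕ) - (m:ℕ)) * c ^ (m:ℕ)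

noncomputable def lpU (n : ℕ) (α : ℝ) : Matrix (Fin (n+1)) (Fin (n+1)) ℝ :=
  fun m j => (Nat.choose (j:ℕ) (m:ℕ) : ℝ) * α ^ ((j:ℕ) - (m:ℕ))

lemma latticePath_factor (n : ℕ) (α β γ : ℝ) (hα : α ≠ 0) (hβ : β ≠ 0) :
    latticePath n α β γ = lpL n β (α*β+γ) * lpU n α := by
  ext i j
  show lpEnt α β γ (i:ℕ) (j:ℕ) = _
  rw [Matrix.mul_apply, lpEnt_formula α β γ hα hβ]
  have hrange : ∑ m : Fin (n+1), lpL n β (α*β+γ) i m * lpU n α m j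
      = ∑ m ∈ Finset.range (n+1), (Nat.choose (i:ℕ) m : ℝ) * β ^ ((i:ℕ) - m)
          * (α*β+γ) ^ m * ((Nat.choose (j:ℕ) m : ℝ) * α ^ ((j:ℕ) - m)) := by
    rw [← Fin.sum_univ_eq_sum_range (fun m => (Nat.choose (i:ℕ) m : ℝ) * β ^ ((i:ℕ) - m)
          * (α*β+γ) ^ m * ((Nat.choose (j:ℕ) m : ℝ) * α ^ ((j:ℕ) - m))) (n+1)]
    rfl
  rw [hrange, S_ext ((α*β+γ)/(α*β)) (i:ℕ) (j:ℕ) (by omega) (show (i:ℕ) < n+1 from i.isLt),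
    Finset.mul_sum]
  apply Finset.sum_congr rfl
  intro m hm
  by_cases hmi : m ≤ (i:ℕ)
  · by_cases hmj : m ≤ (j:ℕ)
    · rw [pow_sub₀ β hβ hmi, pow_sub₀ α hα hmj, div_pow, mul_pow]
      field_simp
    · rw [Nat.choose_eq_zero_of_lt (by omega : (j:ℕ) < m)]
      norm_num
  · rw [Nat.choose_eq_zero_of_lt (by omega : (i:ℕ) < m)]
    norm_num

/-- If `α > 0`, `β > 0` and `αβ + γ > 0`, then the lattice path matrix
`Lp_n(α,β,γ)` is strictly totally positive. -/
theorem latticePath_strictlyTotallyPositive (n : ℕ) (α β γ : ℝ)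
    (hα : 0 < α) (hβ : 0 < β) (h : 0 < α * β + γ) :
    IsStrictlyTotallyPositive (latticePath n α β γ) := by
  intro k r c hr hc
  set cc : ℝ := α * β + γ with hcc
  rw [latticePath_factor n α β γ (ne_of_gt hα) (ne_of_gt hβ)]
  have hsub : ((lpL n β cc * lpU n α).submatrix r c)
      = ((lpL n β cc).submatrix r id) * ((lpU n α).submatrix id c) := by
    ext i j; simp [Matrix.mul_apply]
  rw [hsub, cauchyBinet]
  -- the minors of the two factors
  have hLminor : ∀ (t : Fin k → Fin (n+1)),
      (((lpL n β cc).submatrix r id).submatrix id t).det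
        = ((∏ i, β ^ ((r i : ℕ))) * ∏ j, (cc ^ ((t j : ℕ)) / β ^ ((t j : ℕ)))) *
          (Matrix.of fun i j => ((((r i : ℕ)).choose ((t j : ℕ)) : ℕ) : ℝ)).det := by
    intro t
    have hM : ((lpL n β cc).submatrix r id).submatrix id t
        = Matrix.of (fun i j => (fun i : Fin k => β ^ ((r i : ℕ))) i *
            (Matrix.of (fun i j : Fin k => (fun j : Fin k => (cc ^ ((t j : ℕ)) / β ^ ((t j : ℕ)))) j *
              (Matrix.of fun i j : Fin k => ((((r i : ℕ)).choose ((t j : ℕ)) : ℕ) : ℝ)) i j)) i j) := by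
      ext i j
      simp only [Matrix.submatrix_apply, Matrix.of_apply, id_eq]
      show (Nat.choose ((r i:ℕ)) ((t j:ℕ)) : ℝ) * β ^ ((r i:ℕ) - (t j:ℕ)) * cc ^ ((t j:ℕ)) = _
      by_cases hle : (t j : ℕ) ≤ (r i : ℕ)
      · rw [pow_sub₀ β (ne_of_gt hβ) hle]
        field_simp
      · rw [Nat.choose_eq_zero_of_lt (by omega : (r i:ℕ) < (t j:ℕ))]
        norm_num
    rw [hM, Matrix.det_mul_column, Matrix.det_mul_row, ← mul_assoc]
  have hUminor : ∀ (t : Fin k → Fin (n+1)),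
      (((lpU n α).submatrix id c).submatrix t id).det
        = ((∏ j, α ^ ((c j : ℕ))) * ∏ i, (α ^ ((t i : ℕ)))⁻¹) *
          (Matrix.of fun i j => ((((c i : ℕ)).choose ((t j : ℕ)) : ℕ) : ℝ)).det := by
    intro t
    have hM : ((lpU n α).submatrix id c).submatrix t id
        = Matrix.of (fun i j => (fun i : Fin k => (α ^ ((t i : ℕ)))⁻¹) i *
            (Matrix.of (fun i j : Fin k => (fun j : Fin k => α ^ ((c j : ℕ))) j *
              ((Matrix.of fun i j : Fin k => ((((c i : ℕ)).choose ((t j : ℕ)) : ℕ) : ℝ))ᵀ) i j)) i j) := by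
      ext i j
      simp only [Matrix.submatrix_apply, Matrix.of_apply, Matrix.transpose_apply, id_eq]
      show (Nat.choose ((c j:ℕ)) ((t i:ℕ)) : ℝ) * α ^ ((c j:ℕ) - (t i:ℕ)) = _
      by_cases hle : (t i : ℕ) ≤ (c j : ℕ)
      · rw [pow_sub₀ α (ne_of_gt hα) hle]
        field_simp
      · rw [Nat.choose_eq_zero_of_lt (by omega : (c j:ℕ) < (t i:ℕ))]
        norm_num
    rw [hM, Matrix.det_mul_column, Matrix.det_mul_row, Matrix.det_transpose, ← mul_assoc]
    ring
  have hccpos : 0 < cc := h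
  have hwL : ∀ t : Fin k → Fin (n+1),
      0 < (∏ i, β ^ ((r i : ℕ))) * ∏ j, (cc ^ ((t j : ℕ)) / β ^ ((t j : ℕ))) := by
    intro t
    apply mul_pos <;> apply Finset.prod_pos <;> intro x _ <;> positivity
  have hwU : ∀ t : Fin k → Fin (n+1),
      0 < (∏ j, α ^ ((c j : ℕ))) * ∏ i, (α ^ ((t i : ℕ)))⁻¹ := by
    intro t
    apply mul_pos <;> apply Finset.prod_pos <;> intro x _ <;> positivity
  have hrm : StrictMono (fun i : Fin k => (r i : ℕ)) := fun a b hab => hr hab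
  have hcm : StrictMono (fun i : Fin k => (c i : ℕ)) := fun a b hab => hc hab
  apply Finset.sum_pos'
  · intro t ht
    simp only [Finset.mem_filter, Finset.mem_univ, true_and] at ht
    have htm : StrictMono (fun j : Fin k => (t j : ℕ)) := fun a b hab => ht hab
    rw [hLminor t, hUminor t]
    have h1 := binom_det_nonneg (fun i => (r i : ℕ)) (fun j => (t j : ℕ)) hrm htm
    have h2 := binom_det_nonneg (fun i => (c i : ℕ)) (fun j => (t j : ℕ)) hcm htm
    have hw1 := hwL t
    have hw2 := hwU t
    exact mul_nonneg (mul_nonneg (le_of_lt hw1) h1) (mul_nonneg (le_of_lt hw2) h2)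
  · have hle : ∀ m (hm : m < k), m ≤ (r ⟨m, hm⟩ : ℕ) := by
      intro m
      induction m with
      | zero => intro hm; exact Nat.zero_le _
      | succ p ih =>
        intro hm
        have hp : p < k := by omega
        have h1 := ih hp
        have h2 : (r ⟨p, hp⟩ : ℕ) < (r ⟨p+1, hm⟩ : ℕ) := hr (by simp [Fin.lt_def])
        omega
    have hbound : ∀ j : Fin k, (j:ℕ) < n+1 := by
      intro j
      have h1 := hle (j:ℕ) j.isLt
      have h2 := (r ⟨(j:ℕ), j.isLt⟩).isLt
      omega
    refine ⟨fun j => ⟨(j:ℕ), hbound j⟩, ?_, ?_⟩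
    · simp only [Finset.mem_filter, Finset.mem_univ, true_and]
      intro a b hab
      exact hab
    · rw [hLminor _, hUminor _]
      have h1 := binom_det_id_pos (fun i => (r i : ℕ)) hrm
      have h2 := binom_det_id_pos (fun i => (c i : ℕ)) hcm
      exact mul_pos (mul_pos (hwL _) h1) (mul_pos (hwU _) h2)
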